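/- Upper tail bound for the negative binomial distribution (Lemma on NegBin tails, part 1): Let r ≥ 1 be an integer, p ∈ (0,1], and let X = X_1 + ... + X_r be the sum of r independent geometric random variables, each with success probability p. Then for every real γ > 0 and every real n ≥ 2, P(X > (2/p)·(r + γ·log₂ n)) ≤ n^{-γ}. -/

import Mathlib

open MeasureTheory ProbabilityTheory Real
open scoped ENNReal

lemma aux_lintegral_prod_of_indep {Ω : Type*} [MeasurableSpace Ω] {μ : Measure Ω}
    [IsProbabilityMeasure μ] {ι : Type*} {Y : ι → Ω → ℝ≥0∞}
    (hY : ∀ i, Measurable (Y i))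
    (hind : iIndepFun Y μ) (s : Finset ι) :
    ∫⁻ ω, ∏ i ∈ s, Y i ω ∂μ = ∏ i ∈ s, ∫⁻ ω, Y i ω ∂μ := by
  classical
  induction s using Finset.induction_on with
  | empty => simp
  | @insert i s hi ih =>
    simp_rw [Finset.prod_insert hi]
    rw [← ih]
    have hindep2 : IndepFun (Y i) (∏ j ∈ s, Y j) μ :=
      (hind.indepFun_finsetProd_of_notMem hY hi).symm
    have hindep2' : IndepFun (Y i) (fun ω => ∏ j ∈ s, Y j ω) μ := by
      have : (∏ j ∈ s, Y j) = fun ω => ∏ j ∈ s, Y j ω := by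
        funext ω; simp [Finset.prod_apply]
      rwa [this] at hindep2
    exact lintegral_mul_eq_lintegral_mul_lintegral_of_indepFun''
      (hY i).aemeasurable (Measurable.aemeasurable (f := fun ω => ∏ j ∈ s, Y j ω) (by measurability)) hindep2'

set_option maxHeartbeats 1000000 in
lemma aux_geom {Ω : Type*} [MeasurableSpace Ω] {μ : Measure Ω} [IsProbabilityMeasure μ]
    {p : ℝ} (hp0 : 0 < p) (hp1 : p ≤ 1) {Z : Ω → ℕ} (hZ : Measurable Z)
    (hg : ∀ k : ℕ, 1 ≤ k → μ {ω | Z ω = k} = ENNReal.ofReal ((1 - p) ^ (k - 1) * p)) :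
    ∫⁻ ω, (ENNReal.ofReal (2 / (2 - p))) ^ (Z ω) ∂μ = 2 := by
  set s : ℝ := 2 / (2 - p) with hs
  have h2p : 0 < 2 - p := by linarith
  have hs0 : 0 < s := by positivity
  have hq0 : 0 ≤ 1 - p := by linarith
  have hq1 : 1 - p < 1 := by linarith
  have hr0 : 0 ≤ s * (1 - p) := by positivity
  have hr1 : s * (1 - p) < 1 := by
    rw [hs, div_mul_eq_mul_div, div_lt_one h2p]; linarith
  -- sum of pmf over k ≥ 1 equals 1
  have hpmf : ∀ k : ℕ, μ {ω | Z ω = k + 1} = ENNReal.ofReal ((1 - p) ^ k * p) := by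
    intro k
    simpa using hg (k + 1) (Nat.le_add_left 1 k)
  have hsum1 : (∑' k : ℕ, μ {ω | Z ω = k + 1}) = 1 := by
    simp_rw [hpmf]
    have hofsum := ENNReal.ofReal_tsum_of_nonneg (f := fun k : ℕ => (1 - p) ^ k * p)
      (fun k => by positivity) ((summable_geometric_of_lt_one hq0 hq1).mul_right p)
    rw [← hofsum, tsum_mul_right, tsum_geometric_of_lt_one hq0 hq1]
    rw [show (1 : ℝ) - (1 - p) = p by ring]
    rw [inv_mul_cancel₀ hp0.ne']
    exact ENNReal.ofReal_one
  have huniv : (∑' k : ℕ, μ {ω | Z ω = k}) = 1 := by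
    have hdisj : Pairwise (Function.onFun Disjoint fun k : ℕ => Z ⁻¹' {k}) := by
      intro a b hab
      exact Set.disjoint_iff.2 fun ω ⟨h1, h2⟩ => hab (by
        simp only [Set.mem_preimage, Set.mem_singleton_iff] at h1 h2; rw [← h1, ← h2])
    have := measure_iUnion (μ := μ) hdisj (fun k => hZ (measurableSet_singleton k))
    have hU : (⋃ k : ℕ, Z ⁻¹' {k}) = Set.univ := by
      ext ω; simp
    rw [hU] at this
    have : (∑' k : ℕ, μ (Z ⁻¹' {k})) = 1 := by rw [← this, measure_univ]
    simpa [Set.preimage, Set.mem_singleton_iff] using this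
  have h0 : μ {ω | Z ω = 0} = 0 := by
    have := tsum_eq_zero_add' (f := fun k : ℕ => μ {ω | Z ω = k}) ENNReal.summable
    rw [huniv, hsum1] at this
    have h1top : (1 : ℝ≥0∞) ≠ ⊤ := ENNReal.one_ne_top
    have hms : μ {ω | Z ω = 0} + 1 - 1 = 1 - 1 := by rw [← this]
    rwa [ENNReal.add_sub_cancel_right h1top, tsub_self] at hms
  -- compute the lintegral
  rw [← lintegral_map (f := fun k : ℕ => (ENNReal.ofReal s) ^ k)
    (measurable_of_countable _) hZ, lintegral_countable']
  have hmap : ∀ k : ℕ, (μ.map Z) {k} = μ {ω | Z ω = k} := by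
    intro k
    rw [Measure.map_apply hZ (measurableSet_singleton k)]
    congr 1
  simp_rw [hmap]
  rw [tsum_eq_zero_add' (f := fun k : ℕ => (ENNReal.ofReal s) ^ k * μ {ω | Z ω = k})
    ENNReal.summable]
  rw [h0, mul_zero, zero_add]
  simp_rw [hpmf]
  have hterm : ∀ k : ℕ, (ENNReal.ofReal s) ^ (k + 1) * ENNReal.ofReal ((1 - p) ^ k * p)
      = ENNReal.ofReal (s * p * (s * (1 - p)) ^ k) := by
    intro k
    rw [← ENNReal.ofReal_pow hs0.le, ← ENNReal.ofReal_mul (by positivity)]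
    congr 1
    rw [mul_pow, pow_succ]
    ring
  simp_rw [hterm]
  have hofsum2 := ENNReal.ofReal_tsum_of_nonneg (f := fun k : ℕ => s * p * (s * (1 - p)) ^ k)
    (fun k => by positivity) ((summable_geometric_of_lt_one hr0 hr1).mul_left (s * p))
  rw [← hofsum2, tsum_mul_left, tsum_geometric_of_lt_one hr0 hr1]
  have : s * p * (1 - s * (1 - p))⁻¹ = 2 := by
    rw [hs]
    rw [show (1 : ℝ) - 2 / (2 - p) * (1 - p) = p / (2 - p) by field_simp; ring]
    field_simp
  rw [this]
  simp [ENNReal.ofReal_ofNat]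

/-- Upper tail bound for the negative binomial distribution: the sum of `r`
independent geometric random variables (success probability `p`, values in the
positive integers) exceeds `(2/p)·(r + γ·log₂ n)` with probability at most `n^{-γ}`. -/
theorem negbin_upper_tail
    {Ω : Type*} [MeasurableSpace Ω] (μ : Measure Ω) [IsProbabilityMeasure μ]
    (r : ℕ) (hr : 1 ≤ r) (p : ℝ) (hp0 : 0 < p) (hp1 : p ≤ 1)
    (X : Fin r → Ω → ℕ)
    (hmeas : ∀ i, Measurable (X i))
    (hindep : iIndepFun X μ)
    (hgeom : ∀ i, ∀ k : ℕ, 1 ≤ k →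
      μ {ω | X i ω = k} = ENNReal.ofReal ((1 - p) ^ (k - 1) * p))
    (γ : ℝ) (hγ : 0 < γ) (n : ℝ) (hn : 2 ≤ n) :
    μ {ω | (2 / p) * (r + γ * Real.logb 2 n) < ∑ i, (X i ω : ℝ)}
      ≤ ENNReal.ofReal (n ^ (-γ)) := by
  have h2p : 0 < 2 - p := by linarith
  set s : ℝ := 2 / (2 - p) with hs
  have hs0 : 0 < s := by positivity
  have hs1 : 1 ≤ s := by rw [hs, le_div_iff₀ h2p]; linarith
  set t : ℝ := (2 / p) * (r + γ * Real.logb 2 n) with htdef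
  have hn0 : 0 < n := by linarith
  have hlog2 : 0 < Real.log 2 := Real.log_pos (by norm_num)
  have hlog2' : Real.log 2 ≤ 1 := by
    have := Real.log_le_sub_one_of_pos (x := 2) (by norm_num)
    linarith
  have hlogn : Real.log 2 ≤ Real.log n := Real.log_le_log (by norm_num) hn
  have hlogb1 : 1 ≤ Real.logb 2 n := by
    rw [Real.logb, le_div_iff₀ hlog2, one_mul]; exact hlogn
  have ht0 : 0 ≤ t := by
    have : (0 : ℝ) ≤ γ * Real.logb 2 n := by nlinarith
    have hr1 : (1 : ℝ) ≤ (r : ℝ) := by exact_mod_cast hr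
    rw [htdef]; positivity
  set S : ℝ≥0∞ := ENNReal.ofReal s with hS
  set Y : Fin r → Ω → ℝ≥0∞ := fun i ω => S ^ (X i ω) with hY
  have hYmeas : ∀ i, Measurable (Y i) :=
    fun i => (measurable_of_countable (fun k : ℕ => S ^ k)).comp (hmeas i)
  have hYindep : iIndepFun Y μ :=
    hindep.comp (fun _ => fun k : ℕ => S ^ k) (fun _ => measurable_of_countable _)
  have hlint : ∀ i, ∫⁻ ω, Y i ω ∂μ = 2 :=
    fun i => aux_geom hp0 hp1 (hmeas i) (hgeom i)
  have hprod : ∫⁻ ω, ∏ i, Y i ω ∂μ = 2 ^ r := by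
    rw [aux_lintegral_prod_of_indep hYmeas hYindep]
    simp [hlint]
  have hg : ∀ ω, (∏ i, Y i ω) = S ^ (∑ i, X i ω) := by
    intro ω
    rw [hY]
    exact Finset.prod_pow_eq_pow_sum Finset.univ _ _
  -- event inclusion
  have hsub : {ω | t < ∑ i, (X i ω : ℝ)}
      ⊆ {ω | ENNReal.ofReal (s ^ t) ≤ ∏ i, Y i ω} := by
    intro ω hω
    simp only [Set.mem_setOf_eq] at hω ⊢
    rw [hg ω]
    have hcast : (((∑ i, X i ω : ℕ)) : ℝ) = ∑ i, (X i ω : ℝ) := by push_cast; rfl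
    have h1 : s ^ t ≤ s ^ ((∑ i, X i ω : ℕ) : ℝ) :=
      Real.rpow_le_rpow_of_exponent_le hs1 (by rw [hcast]; exact hω.le)
    rw [Real.rpow_natCast] at h1
    calc ENNReal.ofReal (s ^ t) ≤ ENNReal.ofReal (s ^ (∑ i, X i ω : ℕ)) :=
          ENNReal.ofReal_le_ofReal h1
      _ = S ^ (∑ i, X i ω) := by rw [hS, ENNReal.ofReal_pow hs0.le]
  have hst0 : 0 < s ^ t := Real.rpow_pos_of_pos hs0 t
  have hne0 : ENNReal.ofReal (s ^ t) ≠ 0 := by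
    simp [ENNReal.ofReal_eq_zero, not_le, hst0]
  have hnetop : ENNReal.ofReal (s ^ t) ≠ ⊤ := ENNReal.ofReal_ne_top
  have hmarkov := mul_meas_ge_le_lintegral₀ (μ := μ)
    (f := fun ω => ∏ i, Y i ω)
    (Finset.measurable_prod Finset.univ (fun i _ => hYmeas i)).aemeasurable
    (ENNReal.ofReal (s ^ t))
  rw [hprod] at hmarkov
  have hμle : μ {ω | t < ∑ i, (X i ω : ℝ)} ≤ 2 ^ r / ENNReal.ofReal (s ^ t) := by
    refine le_trans (measure_mono hsub) ?_
    rw [ENNReal.le_div_iff_mul_le (Or.inl hne0) (Or.inl hnetop), mul_comm]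
    exact hmarkov
  refine hμle.trans ?_
  -- key real inequality : 2^r * n^γ ≤ s^t
  have hkey : (2 : ℝ) ^ r * n ^ γ ≤ s ^ t := by
    have hhalf : 0 < 1 - p / 2 := by linarith
    have hsinv : s = (1 - p / 2)⁻¹ := by
      rw [hs, inv_eq_one_div, div_eq_div_iff h2p.ne' (show (1:ℝ) - p/2 ≠ 0 by intro h; linarith [h])]; ring
    have hexps : Real.exp (p / 2) ≤ s := by
      have h1 : 1 - p / 2 ≤ Real.exp (-(p / 2)) := by
        have := Real.add_one_le_exp (-(p / 2)); linarith
      have h2 : (Real.exp (-(p / 2)))⁻¹ ≤ (1 - p / 2)⁻¹ :=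
        inv_anti₀ hhalf h1
      rwa [← Real.exp_neg, neg_neg, ← hsinv] at h2
    have hlogs : p / 2 ≤ Real.log s :=
      (Real.le_log_iff_exp_le hs0).2 hexps
    have hpt : p / 2 * t = r + γ * Real.logb 2 n := by
      rw [htdef]; field_simp
    have h1 : Real.exp (p / 2 * t) ≤ s ^ t := by
      rw [Real.rpow_def_of_pos hs0]
      exact Real.exp_le_exp.2 (by nlinarith)
    have h2r : (2 : ℝ) ^ r ≤ Real.exp r := by
      calc (2 : ℝ) ^ r = Real.exp (Real.log 2) ^ r := by
            rw [Real.exp_log (show (0:ℝ) < 2 by norm_num)]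
        _ = Real.exp (r * Real.log 2) := (Real.exp_nat_mul _ _).symm
        _ ≤ Real.exp r := Real.exp_le_exp.2 (by nlinarith [Nat.cast_nonneg (α := ℝ) r])
    have hnγ : n ^ γ ≤ Real.exp (γ * Real.logb 2 n) := by
      rw [Real.rpow_def_of_pos hn0]
      apply Real.exp_le_exp.2
      have hln : 0 ≤ Real.log n := le_trans hlog2.le hlogn
      have : Real.log n ≤ Real.logb 2 n := by
        rw [Real.logb, le_div_iff₀ hlog2]
        nlinarith
      nlinarith
    calc (2 : ℝ) ^ r * n ^ γ ≤ Real.exp r * Real.exp (γ * Real.logb 2 n) := by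
          apply mul_le_mul h2r hnγ (Real.rpow_nonneg hn0.le γ) (Real.exp_nonneg _)
      _ = Real.exp (p / 2 * t) := by rw [← Real.exp_add, hpt]
      _ ≤ s ^ t := h1
  have hreal : (2 : ℝ) ^ r ≤ n ^ (-γ) * s ^ t := by
    rw [Real.rpow_neg hn0.le, inv_mul_eq_div, le_div_iff₀ (Real.rpow_pos_of_pos hn0 γ)]
    exact hkey
  rw [ENNReal.div_le_iff_le_mul (Or.inl hne0) (Or.inl hnetop)]
  calc (2 : ℝ≥0∞) ^ r = ENNReal.ofReal ((2 : ℝ) ^ r) := by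
        rw [ENNReal.ofReal_pow (by norm_num)]; norm_num
    _ ≤ ENNReal.ofReal (n ^ (-γ) * s ^ t) := ENNReal.ofReal_le_ofReal hreal
    _ = ENNReal.ofReal (n ^ (-γ)) * ENNReal.ofReal (s ^ t) :=
        ENNReal.ofReal_mul (Real.rpow_nonneg hn0.le _)
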